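/- Let G be a locally compact group with center Z, let ω : Z → ℂ^× be a character, and let ψ : G → ℂ satisfy ψ(zg) = ω(z)ψ(g) for all z ∈ Z, g ∈ G. Suppose G' = supp(ψ) is a subgroup, C₀ ⊆ G' is a closed subgroup, and {t} is a set of coset representatives for G'/(C₀Z). Put C = ⋃_t C₀ t and f = ψ·1_C. Then for all g ∈ G, ∫_Z ω(z)^{-1} f(zg) dz = ψ(g) · vol_Z(C₀ ∩ Z). -/

import Mathlib

open MeasureTheory

/-- if `ψ(zg) = ω(z)ψ(g)`, `G' = supp ψ` is a subgroup, `C₀ ⊆ G'` is a closed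
subgroup, `{t}` is a set of coset representatives for `G'/(C₀Z)`, `C = ⋃_t C₀t` and
`f = ψ·1_C`, then `∫_Z ω(z)⁻¹ f(zg) dz = ψ(g) · vol_Z(C₀ ∩ Z)`. -/
theorem stmt7 {G : Type*} [Group G] [TopologicalSpace G] [IsTopologicalGroup G]
    [LocallyCompactSpace G] [MeasurableSpace G] [BorelSpace G]
    (μ : Measure (Subgroup.center G)) [μ.IsHaarMeasure]
    (ω : Subgroup.center G →* ℂˣ)
    (ψ : G → ℂ)
    (hψ : ∀ (z : Subgroup.center G) (g : G), ψ ((z : G) * g) = (ω z : ℂ) * ψ g)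
    (G' : Subgroup G) (hG' : (G' : Set G) = Function.support ψ)
    (C₀ : Subgroup G) (hC₀G' : C₀ ≤ G') (hC₀closed : IsClosed (C₀ : Set G))
    (T : Set G) (hTG' : T ⊆ (G' : Set G))
    (hrep : ∀ g ∈ (G' : Set G), ∃! t, t ∈ T ∧
      ∃ c ∈ (C₀ : Set G), ∃ z ∈ Subgroup.center G, g = c * z * t)
    (C : Set G) (hC : C = ⋃ t ∈ T, (fun c => c * t) '' (C₀ : Set G))
    (f : G → ℂ) (hf : f = Set.indicator C ψ)
    (g : G) :
    ∫ z : Subgroup.center G, ((ω z : ℂ))⁻¹ * f ((z : G) * g) ∂μ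
      = ψ g * ((μ {z : Subgroup.center G | (z : G) ∈ C₀}).toReal : ℂ) := by
  by_cases hg : ψ g = 0
  · have h0 : ∀ z : Subgroup.center G, ((ω z : ℂ))⁻¹ * f ((z : G) * g) = 0 := by
      intro z
      have hfz : f ((z : G) * g) = 0 := by
        rw [hf]
        by_cases hz : (z : G) * g ∈ C
        · simp [Set.indicator_of_mem hz, hψ, hg]
        · simp [Set.indicator_of_notMem hz]
      simp [hfz]
    simp [h0, hg]
  · have hgG' : g ∈ (G' : Set G) := by rw [hG']; exact hg
    obtain ⟨t, ⟨htT, c, hc, z', hz', hgdec⟩, huniq⟩ := hrep g hgG'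
    set z'' : Subgroup.center G := ⟨z', hz'⟩ with hz''
    -- key set characterization
    have key : ∀ z : Subgroup.center G,
        ((z : G) * g ∈ C ↔ ((z'' * z : Subgroup.center G) : G) ∈ (C₀ : Set G)) := by
      intro z
      constructor
      · intro hmem
        rw [hC] at hmem
        simp only [Set.mem_iUnion, Set.mem_image] at hmem
        obtain ⟨t', ht'T, c'', hc'', heq⟩ := hmem
        -- g = c'' * z⁻¹ * t'
        have hzc : ∀ x : G, (z : G) * x = x * (z : G) :=
          fun x => (Subgroup.mem_center_iff.mp z.2 x).symm
        have hzc' : ∀ x : G, (z' : G) * x = x * z' :=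
          fun x => (Subgroup.mem_center_iff.mp hz' x).symm
        have hgdec' : g = c'' * (z : G)⁻¹ * t' := by
          have : g = (z : G)⁻¹ * (c'' * t') := by
            rw [heq]; group
          rw [this]
          have : (z : G)⁻¹ * c'' = c'' * (z : G)⁻¹ := by
            have := hzc c''
            calc (z:G)⁻¹ * c'' = (z:G)⁻¹ * (c'' * (z:G)) * (z:G)⁻¹ := by group
              _ = (z:G)⁻¹ * ((z:G) * c'') * (z:G)⁻¹ := by rw [← this]
              _ = c'' * (z:G)⁻¹ := by group
          rw [← mul_assoc, this]
        have ht'eq : t' = t := by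
          refine huniq t' ⟨ht'T, c'', hc'', (z : G)⁻¹, ?_, hgdec'⟩
          exact (Subgroup.center G).inv_mem z.2
        rw [ht'eq] at heq
        -- z * c * z' * t = c'' * t
        have hmul : (z : G) * c * z' = c'' := by
          have h2 : ((z : G) * c * z') * t = c'' * t := by
            rw [heq, hgdec]; group
          exact mul_right_cancel h2
        have : ((z'' * z : Subgroup.center G) : G) = c⁻¹ * c'' := by
          push_cast
          rw [← hmul, hzc' (z : G), hzc c]
          group
        rw [this]
        exact C₀.mul_mem (C₀.inv_mem hc) hc''
      · intro hmem
        rw [hC]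
        simp only [Set.mem_iUnion, Set.mem_image]
        refine ⟨t, htT, c * ((z'' * z : Subgroup.center G) : G), C₀.mul_mem hc hmem, ?_⟩
        have hzc : ∀ x : G, (z : G) * x = x * (z : G) :=
          fun x => (Subgroup.mem_center_iff.mp z.2 x).symm
        push_cast
        rw [hgdec]
        calc c * ((z':G) * (z:G)) * t = c * (z':G) * ((z:G) * t) := by group
          _ = c * (z':G) * (t * (z:G)) := by rw [hzc t]
          _ = (z:G) * (c * (z':G) * t) := by rw [hzc (c * (z':G) * t)]; group
    -- the set
    set S : Set (Subgroup.center G) := {z | (z : G) ∈ C₀} with hS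
    haveI hMM : MeasurableMul (Subgroup.center G) :=
      ⟨fun a => Measurable.subtype_mk
          ((measurable_const_mul (a : G)).comp measurable_subtype_coe),
        fun a => Measurable.subtype_mk
          ((measurable_mul_const (a : G)).comp measurable_subtype_coe)⟩
    have hSmeas : MeasurableSet S :=
      measurable_subtype_coe hC₀closed.measurableSet
    have hpre : {z : Subgroup.center G | (z : G) * g ∈ C} = (fun z => z'' * z) ⁻¹' S := by
      ext z
      simp only [Set.mem_setOf_eq, Set.mem_preimage, hS, Set.mem_setOf_eq]
      exact key z
    -- rewrite integrand as indicator
    have hint : ∀ z : Subgroup.center G,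
        ((ω z : ℂ))⁻¹ * f ((z : G) * g)
          = Set.indicator ((fun z => z'' * z) ⁻¹' S) (fun _ => ψ g) z := by
      intro z
      by_cases hz : (z : G) * g ∈ C
      · have hz' : z ∈ (fun z => z'' * z) ⁻¹' S := by rw [← hpre]; exact hz
        rw [Set.indicator_of_mem hz']
        rw [hf, Set.indicator_of_mem hz, hψ, ← mul_assoc]
        have : ((ω z : ℂ))⁻¹ * (ω z : ℂ) = 1 := by
          exact inv_mul_cancel₀ (Units.ne_zero (ω z))
        rw [this, one_mul]
      · have hz' : z ∉ (fun z => z'' * z) ⁻¹' S := by rw [← hpre]; exact hz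
        rw [Set.indicator_of_notMem hz', hf, Set.indicator_of_notMem hz, mul_zero]
    rw [integral_congr_ae (Filter.Eventually.of_forall hint)]
    have hSmeas' : MeasurableSet ((fun z => z'' * z) ⁻¹' S) :=
      (measurable_const_mul z'') hSmeas
    rw [integral_indicator_const _ hSmeas']
    rw [measureReal_def, measure_preimage_mul μ z'' S, Complex.real_smul, mul_comm]
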